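/- Let r : 𝔤* → 𝔤 be a skew-symmetric solution of the classical Yang–Baxter equation, and equip 𝔤* with the left symmetric product αβ := ad*_{r(α)}β. Then the trace of the right multiplication R_α : β ↦ βα = ad*_{r(β)}α vanishes for every α ∈ 𝔤* if and only if for every α ∈ 𝔤* the endomorphism of the Lie subalgebra Im(r) ⊆ 𝔤 given by y ↦ [r(α), y] has trace zero (i.e. the quotient Lie algebra 𝔤*/Ker(r) ≅ Im(r) is unimodular). -/
import Mathlib

/-- The coadjoint action of `x : L` on the dual: `⟨coad x α, y⟩ = -⟨α, [x,y]⟩`. -/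
noncomputable def coad {L : Type*} [LieRing L] [LieAlgebra ℝ L]
    (x : L) (α : Module.Dual ℝ L) : Module.Dual ℝ L :=
  -(α ∘ₗ (LieAlgebra.ad ℝ L x))

/-- `[r,r](α,β,γ) := ⟨γ,[r α, r β]⟩ + ⟨α,[r β, r γ]⟩ + ⟨β,[r γ, r α]⟩`. -/
def cybe {L : Type*} [LieRing L] [LieAlgebra ℝ L]
    (r : Module.Dual ℝ L →ₗ[ℝ] L) (α β γ : Module.Dual ℝ L) : ℝ :=
  γ ⁅r α, r β⁆ + α ⁅r β, r γ⁆ + β ⁅r γ, r α⁆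

section Aux

variable {L : Type*} [LieRing L] [LieAlgebra ℝ L]

lemma coad_apply (x : L) (α : Module.Dual ℝ L) (y : L) :
    coad x α y = -α ⁅x, y⁆ := by
  simp [coad, LieAlgebra.ad_apply]

/-- `coad · α` as a linear map in the first argument. -/
noncomputable def coadR (α : Module.Dual ℝ L) : L →ₗ[ℝ] Module.Dual ℝ L where
  toFun x := coad x α
  map_add' x y := by
    ext z; simp [coad_apply, add_lie]; ring
  map_smul' c x := by
    ext z; simp [coad_apply, smul_lie]

variable [FiniteDimensional ℝ L]

lemma key_identity (r : Module.Dual ℝ L →ₗ[ℝ] L)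
    (hskew : ∀ α β : Module.Dual ℝ L, α (r β) = - β (r α))
    (hcybe : ∀ α β γ : Module.Dual ℝ L, cybe r α β γ = 0)
    (α β : Module.Dual ℝ L) :
    r (coad (r α) β) = ⁅r α, r β⁆ + r (coad (r β) α) := by
  rw [← sub_eq_zero, ← Module.forall_dual_apply_eq_zero_iff ℝ]
  intro γ
  have h1 : γ (r (coad (r α) β)) = β ⁅r α, r γ⁆ := by
    rw [hskew γ (coad (r α) β), coad_apply]; ring
  have h2 : γ (r (coad (r β) α)) = α ⁅r β, r γ⁆ := by
    rw [hskew γ (coad (r β) α), coad_apply]; ring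
  have h3 := hcybe α β γ
  unfold cybe at h3
  have h4 : β ⁅r γ, r α⁆ = - β ⁅r α, r γ⁆ := by
    rw [← lie_skew, map_neg]
  simp only [map_sub, map_add, h1, h2] at *
  linarith

end Aux

/-- for a skew-symmetric solution `r` of the CYBE, all right
multiplications `R_α : β ↦ ad*_{r β} α` of the LSA `(𝔤*, αβ = ad*_{r α} β)` have zero
trace iff for every `α` the endomorphism `y ↦ [r α, y]` of the Lie subalgebra `Im r`
has zero trace (i.e. `𝔤*/Ker r ≅ Im r` is unimodular). -/
theorem stmt5 {L : Type*} [LieRing L] [LieAlgebra ℝ L] [FiniteDimensional ℝ L]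
    (r : Module.Dual ℝ L →ₗ[ℝ] L)
    (hskew : ∀ α β : Module.Dual ℝ L, α (r β) = - β (r α))
    (hcybe : ∀ α β γ : Module.Dual ℝ L, cybe r α β γ = 0)
    (Rf : Module.Dual ℝ L → (Module.Dual ℝ L →ₗ[ℝ] Module.Dual ℝ L))
    (Sf : Module.Dual ℝ L → (LinearMap.range r →ₗ[ℝ] LinearMap.range r))
    (hRf : ∀ α β : Module.Dual ℝ L, Rf α β = coad (r β) α)
    (hSf : ∀ (α : Module.Dual ℝ L) (y : LinearMap.range r),
      (Sf α y : L) = ⁅r α, (y : L)⁆) :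
    (∀ α : Module.Dual ℝ L, LinearMap.trace ℝ (Module.Dual ℝ L) (Rf α) = 0) ↔
    (∀ α : Module.Dual ℝ L, LinearMap.trace ℝ (LinearMap.range r) (Sf α) = 0) := by
  classical
  -- a linear section of the corestriction of r
  obtain ⟨g, hg⟩ := r.rangeRestrict.exists_rightInverse_of_surjective
    (LinearMap.range_rangeRestrict r)
  -- the nondegenerate pairing map Ω : W →ₗ Dual W
  set Ω : LinearMap.range r →ₗ[ℝ] Module.Dual ℝ (LinearMap.range r) := (LinearMap.range r).subtype.dualMap ∘ₗ g with hΩdef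
  have hΩ : ∀ β : Module.Dual ℝ L, Ω (r.rangeRestrict β) = (LinearMap.range r).subtype.dualMap β := by
    intro β
    have hδ : r (g (r.rangeRestrict β)) = r β := by
      have := congrArg (fun f => f (r.rangeRestrict β)) hg
      simpa using congrArg (Subtype.val) this
    ext v
    obtain ⟨γ, hγ⟩ := v.2
    simp only [hΩdef, LinearMap.coe_comp, Function.comp_apply, LinearMap.dualMap_apply,
      Submodule.coe_subtype]
    rw [← hγ]
    rw [hskew (g (r.rangeRestrict β)) γ, hδ, hskew β γ]
  have hΩinj : Function.Injective Ω := by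
    rw [← LinearMap.ker_eq_bot]
    rw [Submodule.eq_bot_iff]
    intro u hu
    obtain ⟨β, hβ⟩ := u.2
    have hu' : r.rangeRestrict β = u := Subtype.ext hβ
    have h0 : (LinearMap.range r).subtype.dualMap β = 0 := by
      rw [← hΩ β, hu']; exact hu
    have hr0 : r β = 0 := by
      rw [← Module.forall_dual_apply_eq_zero_iff ℝ]
      intro γ
      have : β (r γ) = 0 := by
        have := congrArg (fun f => f (r.rangeRestrict γ)) h0
        simpa using this
      rw [hskew γ β, this, neg_zero]
    exact Subtype.ext (by rw [← hβ, hr0]; rfl)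
  have hΩsurj : Function.Surjective Ω := by
    rw [← LinearMap.injective_iff_surjective_of_finrank_eq_finrank
      (Subspace.dual_finrank_eq).symm]
    exact hΩinj
  set Ωe : LinearMap.range r ≃ₗ[ℝ] Module.Dual ℝ (LinearMap.range r) := LinearEquiv.ofBijective Ω ⟨hΩinj, hΩsurj⟩ with hΩedef
  -- the crucial trace identity
  have hkey : ∀ α, LinearMap.trace ℝ (Module.Dual ℝ L) (Rf α)
      = -2 * LinearMap.trace ℝ (LinearMap.range r) (Sf α) := by
    intro α
    set A : L →ₗ[ℝ] L := r ∘ₗ coadR α with hAdef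
    have hmem : ∀ x : L, A x ∈ LinearMap.range r := fun x => LinearMap.mem_range_self r _
    set A' : L →ₗ[ℝ] LinearMap.range r := A.codRestrict (LinearMap.range r) hmem with hA'def
    set T : LinearMap.range r →ₗ[ℝ] LinearMap.range r := A' ∘ₗ (LinearMap.range r).subtype with hTdef
    -- trace of Rf α equals trace of T
    have htrT : LinearMap.trace ℝ (Module.Dual ℝ L) (Rf α) = LinearMap.trace ℝ (LinearMap.range r) T := by
      have h1 : Rf α = coadR α ∘ₗ r := by
        ext β; simp [hRf, coadR]
      rw [h1, LinearMap.trace_comp_comm']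
      have h2 : r ∘ₗ coadR α = (LinearMap.range r).subtype ∘ₗ A' := by
        ext x; simp [hA'def, hAdef]
      rw [h2, LinearMap.trace_comp_comm']
    set Lop : LinearMap.range r →ₗ[ℝ] LinearMap.range r := Sf α + T with hLopdef
    -- adjointness: Ω ∘ Lop = -(Sf α).dualMap ∘ Ω
    have hadj : Ω ∘ₗ Lop = -((Sf α).dualMap ∘ₗ Ω) := by
      ext u v
      obtain ⟨β, hβ⟩ := u.2
      have hu' : r.rangeRestrict β = u := Subtype.ext hβ
      have hLop : Lop u = r.rangeRestrict (coad (r α) β) := by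
        apply Subtype.ext
        have hT : (T u : L) = r (coad (r β) α) := by
          simp only [hTdef, hA'def, hAdef, LinearMap.coe_comp, Function.comp_apply,
            Submodule.coe_subtype, LinearMap.codRestrict_apply]
          simp [coadR, ← hβ]
        have hSu : ((Sf α) u : L) = ⁅r α, (u : L)⁆ := hSf α u
        have hLu : (Lop u : L) = ⁅r α, (u : L)⁆ + r (coad (r β) α) := by
          simp [hLopdef, hSu, hT]
        rw [hLu, ← hβ, ← key_identity r hskew hcybe α β]
        rfl
      have hΩu : Ω u = (LinearMap.range r).subtype.dualMap β := by rw [← hu', hΩ]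
      show (Ω (Lop u)) v = (-((Sf α).dualMap ∘ₗ Ω)) u v
      rw [hLop, hΩ]
      simp only [LinearMap.neg_apply, LinearMap.coe_comp, Function.comp_apply, hΩu,
        LinearMap.dualMap_apply, Submodule.coe_subtype]
      rw [coad_apply]
      have hSv : β ((Sf α v : L)) = β ⁅r α, (v : L)⁆ := by rw [hSf]
      simp [hSv]
    -- conjugation: Ωe.conj Lop = -(Sf α).dualMap
    have hconj : Ωe.conj Lop = -((Sf α).dualMap) := by
      ext w
      rw [LinearEquiv.conj_apply]
      simp only [LinearMap.coe_comp, Function.comp_apply, LinearEquiv.coe_coe]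
      have h1 : Ωe ((Lop (Ωe.symm w))) = (Ω ∘ₗ Lop) (Ωe.symm w) := rfl
      rw [h1, hadj]
      simp only [LinearMap.neg_apply, LinearMap.coe_comp, Function.comp_apply]
      have h2 : Ω (Ωe.symm w) = w := Ωe.apply_symm_apply w
      rw [h2]
    have htrL : LinearMap.trace ℝ (LinearMap.range r) Lop = - LinearMap.trace ℝ (LinearMap.range r) (Sf α) := by
      have h5 := LinearMap.trace_conj' Lop Ωe
      rw [hconj] at h5
      have h6 := map_neg (LinearMap.trace ℝ (Module.Dual ℝ (LinearMap.range r)))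
        ((Sf α).dualMap)
      rw [h6, LinearMap.dualMap_def, LinearMap.trace_transpose'] at h5
      linarith
    have htrL2 : LinearMap.trace ℝ (LinearMap.range r) Lop
        = LinearMap.trace ℝ (LinearMap.range r) (Sf α) + LinearMap.trace ℝ (LinearMap.range r) T := by
      rw [hLopdef, map_add]
    rw [htrT]
    have : LinearMap.trace ℝ (LinearMap.range r) T = -2 * LinearMap.trace ℝ (LinearMap.range r) (Sf α) := by linarith
    exact this
  constructor
  · intro h α
    have := h α
    rw [hkey α] at this
    linarith
  · intro h α
    rw [hkey α, h α]
    ring
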